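/- Let M be a matroid with finite ground set E, rank(M) = r ≥ 1, and let k ≥ 0 be an integer. Let B ⊆ E be a k-fault-tolerant spanning set, let x ∈ B, and set Y = B \ {x}. Suppose y ∈ E \ B is an element such that for every F ⊆ Y with |F| ≤ k and rank(Y \ F) < r, one has y ∉ cl(Y \ F). Then Y ∪ {y} is a k-fault-tolerant spanning set of M (of the same cardinality as B). -/

import Mathlib

open Set

/-- The rank of a set `X` in a matroid `M`: the maximum cardinality of an
independent subset of `X`. -/
noncomputable def mrank {α : Type*} (M : Matroid α) (X : Set α) : ℕ :=
  sSup {n : ℕ | ∃ I, M.Indep I ∧ I ⊆ X ∧ I.ncard = n}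

/-- `B` is a `k`-fault-tolerant spanning set of `M`: `B ⊆ M.E` and removing any
at most `k` elements from `B` leaves a set of full rank. -/
def FTSpanning {α : Type*} (M : Matroid α) (k : ℕ) (B : Set α) : Prop :=
  B ⊆ M.E ∧ ∀ F ⊆ B, F.ncard ≤ k → mrank M (B \ F) = mrank M M.E

/-- `B` is a `k`-fault-tolerant basis of `M`: a `k`-fault-tolerant spanning set of
minimum cardinality among all `k`-fault-tolerant spanning sets. -/
def FTBasis {α : Type*} (M : Matroid α) (k : ℕ) (B : Set α) : Prop :=
  FTSpanning M k B ∧ ∀ B', FTSpanning M k B' → B.ncard ≤ B'.ncard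

/-- `X` is `h`-uniform in `M`: `rank(X) = h` and every subset of `X` of size `h`
has rank `h`. -/
def HUniform {α : Type*} (M : Matroid α) (h : ℕ) (X : Set α) : Prop :=
  mrank M X = h ∧ ∀ Y ⊆ X, Y.ncard = h → mrank M Y = h

lemma mrank_eq_of_basis {α : Type*} {M : Matroid α} {I X : Set α} (hX : X.Finite)
    (hI : M.IsBasis I X) : mrank M X = I.ncard := by
  have hne : {n : ℕ | ∃ J, M.Indep J ∧ J ⊆ X ∧ J.ncard = n}.Nonempty :=
    ⟨0, ∅, M.empty_indep, empty_subset _, by simp⟩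
  have hbdd : BddAbove {n : ℕ | ∃ J, M.Indep J ∧ J ⊆ X ∧ J.ncard = n} := by
    refine ⟨X.ncard, ?_⟩
    rintro n ⟨J, hJ, hJX, rfl⟩
    exact Set.ncard_le_ncard hJX hX
  apply le_antisymm
  · apply csSup_le hne
    rintro n ⟨J, hJ, hJX, rfl⟩
    obtain ⟨J', hJ', hJJ'⟩ := hJ.subset_isBasis_of_subset hJX hI.subset_ground
    have h1 : J'.ncard = I.ncard :=
      Matroid.IsBase.ncard_eq_ncard_of_isBase hJ'.isBase_restrict hI.isBase_restrict
    exact (Set.ncard_le_ncard hJJ' (hX.subset hJ'.subset)).trans h1.le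
  · exact le_csSup hbdd ⟨I, hI.indep, hI.subset, rfl⟩

lemma mrank_mono {α : Type*} {M : Matroid α} {X Z : Set α} (hZ : Z.Finite)
    (hXZ : X ⊆ Z) (hZE : Z ⊆ M.E) : mrank M X ≤ mrank M Z := by
  obtain ⟨I, hI⟩ := M.exists_isBasis X (hXZ.trans hZE)
  obtain ⟨J, hJ, hIJ⟩ := hI.indep.subset_isBasis_of_subset (hI.subset.trans hXZ) hZE
  rw [mrank_eq_of_basis (hZ.subset hXZ) hI, mrank_eq_of_basis hZ hJ]
  exact Set.ncard_le_ncard hIJ (hZ.subset hJ.subset)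

lemma mrank_insert_le {α : Type*} {M : Matroid α} {X : Set α} {e : α} (hX : X.Finite)
    (hXE : X ⊆ M.E) (heE : e ∈ M.E) : mrank M (insert e X) ≤ mrank M X + 1 := by
  obtain ⟨I, hI⟩ := M.exists_isBasis X hXE
  have hiE : insert e X ⊆ M.E := insert_subset heE hXE
  obtain ⟨J, hJ, hIJ⟩ := hI.indep.subset_isBasis_of_subset
    (hI.subset.trans (subset_insert e X)) hiE
  have hJsub : J ⊆ insert e I := by
    intro f hfJ
    rcases hJ.subset hfJ with hfe | hfX
    · exact hfe ▸ mem_insert _ _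
    by_contra hfI
    have hfI' : f ∉ I := fun h => hfI (mem_insert_of_mem _ h)
    exact (hI.insert_dep ⟨hfX, hfI'⟩).not_indep
      (hJ.indep.subset (insert_subset hfJ hIJ))
  rw [mrank_eq_of_basis (hX.insert e) hJ, mrank_eq_of_basis hX hI]
  calc J.ncard ≤ (insert e I).ncard :=
        Set.ncard_le_ncard hJsub ((hX.subset hI.subset).insert e)
    _ ≤ I.ncard + 1 := Set.ncard_insert_le e I

lemma mrank_insert_of_not_mem_closure {α : Type*} {M : Matroid α} {X : Set α} {e : α}
    (hX : X.Finite) (hXE : X ⊆ M.E) (heE : e ∈ M.E) (he : e ∉ M.closure X) :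
    mrank M (insert e X) = mrank M X + 1 := by
  obtain ⟨I, hI⟩ := M.exists_isBasis X hXE
  have hecl : e ∉ M.closure I := by rwa [hI.closure_eq_closure]
  have heI : e ∉ I := fun h => hecl (M.mem_closure_of_mem h hI.left_subset_ground)
  have hind : M.Indep (insert e I) :=
    (Matroid.Indep.insert_indep_iff_of_notMem hI.indep heI).2 ⟨heE, hecl⟩
  have hJ := hI.insert_isBasis_insert hind
  rw [mrank_eq_of_basis (hX.insert e) hJ, mrank_eq_of_basis hX hI,
    Set.ncard_insert_of_notMem heI (hX.subset hI.subset)]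

/-- Let `M` have finite ground set and rank `r ≥ 1`, let `B` be a
`k`-fault-tolerant spanning set, `x ∈ B`, `Y = B \ {x}`, and let `y ∈ M.E \ B` be such
that for every `F ⊆ Y` with `|F| ≤ k` and `rank(Y \ F) < r`, one has `y ∉ cl(Y \ F)`.
Then `Y ∪ {y}` is a `k`-fault-tolerant spanning set of the same cardinality as `B`. -/
theorem statement8 {α : Type*} (M : Matroid α) (hE : M.E.Finite)
    (r : ℕ) (hr : r = mrank M M.E) (hr1 : 1 ≤ r) (k : ℕ)
    (B : Set α) (hB : FTSpanning M k B)
    (x : α) (hx : x ∈ B) (Y : Set α) (hY : Y = B \ {x})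
    (y : α) (hy : y ∈ M.E \ B)
    (hygood : ∀ F ⊆ Y, F.ncard ≤ k → mrank M (Y \ F) < r → y ∉ M.closure (Y \ F)) :
    FTSpanning M k (Y ∪ {y}) ∧ (Y ∪ {y}).ncard = B.ncard := by
  have hBE : B ⊆ M.E := hB.1
  have hBfin : B.Finite := hE.subset hBE
  have hYB : Y ⊆ B := hY ▸ diff_subset
  have hYfin : Y.Finite := hBfin.subset hYB
  have hyE : y ∈ M.E := hy.1
  have hyB : y ∉ B := hy.2
  have hyY : y ∉ Y := fun h => hyB (hYB h)
  have hxY : x ∉ Y := by simp [hY]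
  have hsub : Y ∪ {y} ⊆ M.E := union_subset (hYB.trans hBE) (by simpa using hyE)
  constructor
  · refine ⟨hsub, fun F hF hFk => ?_⟩
    have hFfin : F.Finite := (hYfin.insert y).subset (by simpa [union_comm] using hF)
    by_cases hyF : y ∈ F
    · -- (Y ∪ {y}) \ F = B \ (insert x (F \ {y}))
      have hFY : F \ {y} ⊆ Y := by
        intro a ha
        rcases hF ha.1 with h | h
        · exact h
        · exact absurd h ha.2
      have hset : (Y ∪ {y}) \ F = B \ insert x (F \ {y}) := by
        ext a
        simp only [mem_diff, mem_union, mem_singleton_iff, mem_insert_iff, hY]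
        constructor
        · rintro ⟨h | rfl, haF⟩
          · exact ⟨h.1, by rintro (rfl | hh); exact h.2 rfl; exact haF hh.1⟩
          · exact absurd hyF haF
        · rintro ⟨haB, h⟩
          have hax : a ≠ x := fun hax => h (Or.inl hax)
          refine ⟨Or.inl ⟨haB, hax⟩, fun haF => h (Or.inr ⟨haF, ?_⟩)⟩
          rintro rfl; exact hyB haB
      have hcard : (insert x (F \ {y})).ncard ≤ k := by
        calc (insert x (F \ {y})).ncard ≤ (F \ {y}).ncard + 1 := Set.ncard_insert_le _ _
          _ = F.ncard := Set.ncard_diff_singleton_add_one hyF hFfin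
          _ ≤ k := hFk
      rw [hset]
      exact hB.2 _ (insert_subset hx (hFY.trans hYB)) hcard
    · -- F ⊆ Y
      have hFY : F ⊆ Y := fun a ha => (hF ha).resolve_right (fun h => hyF (h ▸ ha))
      have hxF : x ∉ F := fun h => hxY (hFY h)
      have hset : (Y ∪ {y}) \ F = insert y (Y \ F) := by
        ext a
        simp only [mem_diff, mem_union, mem_singleton_iff, mem_insert_iff]
        constructor
        · rintro ⟨h | rfl, haF⟩
          · exact Or.inr ⟨h, haF⟩
          · exact Or.inl rfl
        · rintro (rfl | ⟨haY, haF⟩)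
          · exact ⟨Or.inr rfl, hyF⟩
          · exact ⟨Or.inl haY, haF⟩
      have hBF : B \ F = insert x (Y \ F) := by
        ext a
        simp only [mem_diff, mem_insert_iff, hY, mem_singleton_iff]
        constructor
        · rintro ⟨haB, haF⟩
          by_cases hax : a = x
          · exact Or.inl hax
          · exact Or.inr ⟨⟨haB, hax⟩, haF⟩
        · rintro (rfl | ⟨⟨haB, _⟩, haF⟩)
          · exact ⟨hx, hxF⟩
          · exact ⟨haB, haF⟩
      have hsfin : (Y \ F).Finite := hYfin.diff
      have hsE : Y \ F ⊆ M.E := (diff_subset.trans hYB).trans hBE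
      have hrB : mrank M (B \ F) = r := by rw [hB.2 F (hFY.trans hYB) hFk, hr]
      have hle : mrank M (Y \ F) ≤ r := hr ▸ mrank_mono hE hsE subset_rfl
      rw [hset]
      rcases lt_or_eq_of_le hle with hlt | heq
      · have hycl : y ∉ M.closure (Y \ F) := hygood F hFY hFk hlt
        have h1 : mrank M (insert y (Y \ F)) = mrank M (Y \ F) + 1 :=
          mrank_insert_of_not_mem_closure hsfin hsE hyE hycl
        have h2 : r ≤ mrank M (Y \ F) + 1 := by
          rw [← hrB, hBF]
          exact mrank_insert_le hsfin hsE (hBE hx)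
        rw [← hr]
        omega
      · apply le_antisymm
        · rw [← hr]
          exact hr ▸ mrank_mono hE (insert_subset hyE hsE) subset_rfl
        · rw [← hr, ← heq]
          exact mrank_mono (hsfin.insert y) (subset_insert _ _)
            (insert_subset hyE hsE)
  · have h1 : (Y ∪ {y}).ncard = Y.ncard + 1 := by
      rw [union_singleton, Set.ncard_insert_of_notMem hyY hYfin]
    have h2 : Y.ncard + 1 = B.ncard := by
      rw [hY, Set.ncard_diff_singleton_add_one hx hBfin]
    rw [h1, h2]
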